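/- Assume assumptions A1 and A2 hold, that m_ω = M_ω − 1 and M_F > d − 2M_ω, and that the gradient lower bound |∇ω(x)| ≥ C|x|^{m_ω} holds for ALL x ∈ ℝ^d with |x| ≥ 1 (not only for x ∈ Σ ∩ supp F). Then assumption A5 is fulfilled: for every κ > 0, ∫_{D_κ} |F(x)|/ω(x)² dx < ∞. -/

import Mathlib

open MeasureTheory Real Filter Topology InnerProductSpace

lemma exists_zero_of_small {E : Type*} [NormedAddCommGroup E] [InnerProductSpace ℝ E]
    [FiniteDimensional ℝ E]
    (ω : E → ℝ) (hω : Differentiable ℝ ω) (x : E) (r δ : ℝ) (hr : 0 < r) (hδ : 0 < δ)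
    (hgrad : ∀ y ∈ Metric.closedBall x r, δ ≤ ‖gradient ω y‖)
    (hsmall : |ω x| < δ * r / 2) :
    ∃ y ∈ Metric.closedBall x r, ω y = 0 := by
  by_contra hcon
  push_neg at hcon
  set g : E → ℝ := fun y => |ω y| + δ / 2 * ‖y - x‖ with hg
  have hgc : Continuous g := by
    exact (continuous_abs.comp hω.continuous).add
      (continuous_const.mul ((continuous_id.sub continuous_const).norm))
  obtain ⟨y₀, hy₀mem, hy₀min⟩ := (isCompact_closedBall x r).exists_isMinOn
    ⟨x, Metric.mem_closedBall_self hr.le⟩ hgc.continuousOn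
  have hgx : g x = |ω x| := by simp [hg]
  have hgy₀x : g y₀ ≤ |ω x| := hgx ▸ hy₀min (Metric.mem_closedBall_self hr.le)
  have habs0 : (0:ℝ) ≤ |ω y₀| := abs_nonneg _
  have hlt : ‖y₀ - x‖ < r := by
    by_contra hge
    push_neg at hge
    have : δ / 2 * r ≤ δ / 2 * ‖y₀ - x‖ := by nlinarith
    have h5 : δ * r / 2 ≤ g y₀ := by simp only [hg]; nlinarith
    exact absurd (lt_of_le_of_lt hgy₀x hsmall) (not_lt.mpr h5)
  have hne : ω y₀ ≠ 0 := hcon y₀ hy₀mem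
  set G := ‖gradient ω y₀‖ with hGdef
  have hGδ : δ ≤ G := hgrad y₀ hy₀mem
  have hGpos : 0 < G := lt_of_lt_of_le hδ hGδ
  set s : ℝ := if 0 < ω y₀ then 1 else -1 with hsdef
  have hs2 : s * s = 1 := by rcases ite_eq_or_eq (0 < ω y₀) (1:ℝ) (-1) with h | h <;>
    rw [hsdef, h] <;> norm_num
  have hsabs : |ω y₀| = s * ω y₀ := by
    rcases lt_or_gt_of_ne hne with h | h
    · rw [hsdef, if_neg (by linarith), abs_of_neg h]; ring
    · rw [hsdef, if_pos h, abs_of_pos h]; ring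
  set v : E := (-(s / G)) • gradient ω y₀ with hvdef
  have hsabs1 : |s| = 1 := by rcases ite_eq_or_eq (0 < ω y₀) (1:ℝ) (-1) with h | h <;>
    rw [hsdef, h] <;> norm_num
  have hvnorm : ‖v‖ = 1 := by
    rw [hvdef, norm_smul, Real.norm_eq_abs, abs_neg, abs_div, hsabs1, abs_of_pos hGpos]
    field_simp
    exact hGdef.symm
  have hd1 : HasDerivAt (fun t : ℝ => y₀ + t • v) v 0 := by
    have := ((hasDerivAt_id (0:ℝ)).smul_const v).const_add y₀
    simpa using this
  have hφ : HasDerivAt (fun t : ℝ => ω (y₀ + t • v)) (fderiv ℝ ω y₀ v) 0 := by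
    have hfd : HasFDerivAt ω (fderiv ℝ ω (y₀ + (0:ℝ) • v)) (y₀ + (0:ℝ) • v) :=
      (hω _).hasFDerivAt
    have h := hfd.comp_hasDerivAt 0 hd1
    simp only [zero_smul, add_zero] at h; exact h
  have hinner : fderiv ℝ ω y₀ v = -(s / G) * (G * G) := by
    have h1 : inner ℝ (gradient ω y₀) v = fderiv ℝ ω y₀ v := by
      rw [gradient]; exact toDual_symm_apply
    rw [← h1, hvdef, real_inner_smul_right, real_inner_self_eq_norm_mul_norm]
  have hsD : s * fderiv ℝ ω y₀ v = -G := by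
    rw [hinner]; field_simp; nlinarith [hs2]
  have hψ : HasDerivAt (fun t : ℝ => s * ω (y₀ + t • v) + δ / 2 * (‖y₀ - x‖ + t))
      (-G + δ / 2) 0 := by
    have h1 := hφ.const_mul s
    have h2 : HasDerivAt (fun t : ℝ => δ / 2 * (‖y₀ - x‖ + t)) (δ / 2) 0 := by
      simpa using ((hasDerivAt_id (0:ℝ)).const_add ‖y₀ - x‖).const_mul (δ / 2)
    have := h1.add h2
    rwa [hsD] at this
  set ψ : ℝ → ℝ := fun t => s * ω (y₀ + t • v) + δ / 2 * (‖y₀ - x‖ + t) with hψdef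
  have hslope : Tendsto (slope ψ 0) (𝓝[>] (0:ℝ)) (𝓝 (-G + δ / 2)) := by
    have := (hψ.hasDerivWithinAt (s := Set.Ioi (0:ℝ)))
    rw [hasDerivWithinAt_iff_tendsto_slope] at this
    simpa [Set.diff_singleton_eq_self (Set.notMem_Ioi.mpr le_rfl)] using this
  have hcneg : -G + δ / 2 < 0 := by linarith
  have E1 : ∀ᶠ t in 𝓝[>] (0:ℝ), slope ψ 0 t < 0 := hslope.eventually_lt_const hcneg
  have htend0 : Tendsto (fun t : ℝ => t) (𝓝[>] (0:ℝ)) (𝓝 0) :=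
    tendsto_id.mono_left nhdsWithin_le_nhds
  have E2 : ∀ᶠ t in 𝓝[>] (0:ℝ), t < r - ‖y₀ - x‖ :=
    htend0.eventually_lt_const (by linarith)
  have hcont : Tendsto (fun t : ℝ => ω (y₀ + t • v)) (𝓝[>] (0:ℝ)) (𝓝 (ω y₀)) := by
    have hline : Continuous fun t : ℝ => y₀ + t • v :=
      continuous_const.add (continuous_id.smul continuous_const)
    have : Continuous fun t : ℝ => ω (y₀ + t • v) := hω.continuous.comp hline
    have h2 := (this.tendsto 0).mono_left (nhdsWithin_le_nhds (s := Set.Ioi (0:ℝ)))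
    simpa using h2
  have E3 : ∀ᶠ t in 𝓝[>] (0:ℝ), |ω (y₀ + t • v)| = s * ω (y₀ + t • v) := by
    rcases lt_or_gt_of_ne hne with h | h
    · filter_upwards [hcont.eventually_lt_const h] with t ht
      rw [hsdef, if_neg (by linarith), abs_of_neg ht]; ring
    · filter_upwards [hcont.eventually_const_lt h] with t ht
      rw [hsdef, if_pos h, abs_of_pos ht]; ring
  have E4 : ∀ᶠ t in 𝓝[>] (0:ℝ), 0 < t := eventually_mem_nhdsWithin
  obtain ⟨t, h1, h2, h3, h4⟩ := (E1.and (E2.and (E3.and E4))).exists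
  -- from slope negative: ψ t < ψ 0
  have hψlt : ψ t < ψ 0 := by
    have hslope_eq : slope ψ 0 t = (ψ t - ψ 0) / t := by
      rw [slope_def_field]; ring_nf
    rw [hslope_eq] at h1
    have := (div_neg_iff).mp h1
    rcases this with ⟨hnum, _⟩ | ⟨_, hden⟩
    · linarith
    · linarith
  have hnormle : ‖y₀ + t • v - x‖ ≤ ‖y₀ - x‖ + t := by
    have : y₀ + t • v - x = (y₀ - x) + t • v := by abel
    rw [this]
    calc ‖(y₀ - x) + t • v‖ ≤ ‖y₀ - x‖ + ‖t • v‖ := norm_add_le _ _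
    _ = ‖y₀ - x‖ + t := by rw [norm_smul, hvnorm, Real.norm_eq_abs, abs_of_pos h4]; ring
  have hmem : y₀ + t • v ∈ Metric.closedBall x r := by
    rw [Metric.mem_closedBall, dist_eq_norm]
    linarith
  have hgle : g (y₀ + t • v) ≤ ψ t := by
    simp only [hg, hψdef]
    rw [h3]
    nlinarith
  have hψ0 : ψ 0 = g y₀ := by simp [hψdef, hg, hsabs]
  have := hy₀min hmem
  simp only [Set.mem_setOf_eq] at this
  have : g y₀ ≤ g (y₀ + t • v) := this
  linarith

set_option maxHeartbeats 2000000 in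
/-- Lemma 1.2: a sufficient condition for assumption A5.  Here `Σ₀` is encoded as
`{x | ω x = 0 ∧ (gradient ω 0 = 0 → x ≠ 0)}`, which equals `Σ \ {0}` if `0` is a
critical point of `ω` and equals `Σ` otherwise. -/
theorem statement2
    (d : ℕ) (hd : 2 ≤ d)
    (M_F M_ω m_ω : ℝ) (hm : m_ω = M_ω - 1) (hMF : M_F > d - 2 * M_ω)
    (F ω : EuclideanSpace ℝ (Fin d) → ℝ)
    (hF : ContDiff ℝ 2 F) (hω : ContDiff ℝ 4 ω)
    (C_F : ℝ) (hCF : 0 < C_F)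
    (hA1 : ∀ i : ℕ, i ≤ 2 → ∀ x : EuclideanSpace ℝ (Fin d),
      ‖iteratedFDeriv ℝ i F x‖ ≤ C_F * (max 1 ‖x‖) ^ (-M_F - (i : ℝ)))
    (C_ω : ℝ) (hCω : 0 < C_ω)
    (hA2 : ∀ i : ℕ, i ≤ 4 → ∀ x ∈ tsupport F,
      ‖iteratedFDeriv ℝ i ω x‖ ≤ C_ω * (max 1 ‖x‖) ^ (M_ω - (i : ℝ)))
    (C_g : ℝ) (hCg : 0 < C_g)
    (hA3' : ∀ x : EuclideanSpace ℝ (Fin d), 1 ≤ ‖x‖ →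
      C_g * ‖x‖ ^ m_ω ≤ ‖gradient ω x‖) :
    ∀ κ : ℝ, 0 < κ → IntegrableOn (fun x => |F x| / (ω x) ^ 2)
      {x : EuclideanSpace ℝ (Fin d) | 1 ≤ ‖x‖ ∧
        κ * ‖x‖ ^ (m_ω + 2 - M_ω) ≤
          Metric.infDist x {y | ω y = 0 ∧ (gradient ω 0 = 0 → y ≠ 0)}} := by
  subst hm
  intro κ hκ
  have hexp : M_ω - 1 + 2 - M_ω = (1:ℝ) := by ring
  simp only [hexp, Real.rpow_one]
  set T : Set (EuclideanSpace ℝ (Fin d)) := {y | ω y = 0 ∧ (gradient ω 0 = 0 → y ≠ 0)} with hT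
  set S : Set (EuclideanSpace ℝ (Fin d)) := {x | 1 ≤ ‖x‖ ∧ κ * ‖x‖ ≤ Metric.infDist x T} with hS
  have hωdiff : Differentiable ℝ ω := hω.differentiable (by norm_num)
  -- constants
  set c₀ : ℝ := min ((1/2 : ℝ) ^ (M_ω - 1)) ((2 : ℝ) ^ (M_ω - 1)) with hc₀def
  have hc₀ : 0 < c₀ :=
    lt_min (Real.rpow_pos_of_pos (by norm_num) _) (Real.rpow_pos_of_pos (by norm_num) _)
  set c₁ : ℝ := C_g * c₀ * min κ 1 / 4 with hc₁def
  have hminκ : 0 < min κ 1 := lt_min hκ one_pos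
  have hc₁ : 0 < c₁ := by positivity
  -- key pointwise lower bound on |ω|
  have key : ∀ x : EuclideanSpace ℝ (Fin d), 2 ≤ ‖x‖ → κ * ‖x‖ ≤ Metric.infDist x T →
      c₁ * ‖x‖ ^ M_ω ≤ |ω x| := by
    intro x hx2 hdist
    have hx0 : (0:ℝ) < ‖x‖ := by linarith
    set r : ℝ := min κ 1 * ‖x‖ / 2 with hrdef
    have hr : 0 < r := by positivity
    have hrle : r ≤ ‖x‖ / 2 := by
      have h1 : min κ 1 ≤ 1 := min_le_right _ _
      have := norm_nonneg x
      rw [hrdef]; nlinarith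
    set δ : ℝ := C_g * (c₀ * ‖x‖ ^ (M_ω - 1)) with hδdef
    have hδ : 0 < δ := by
      have := Real.rpow_pos_of_pos hx0 (M_ω - 1); positivity
    have hgrad : ∀ y ∈ Metric.closedBall x r, δ ≤ ‖gradient ω y‖ := by
      intro y hy
      have hyx : ‖y - x‖ ≤ r := mem_closedBall_iff_norm.mp hy
      have habs := abs_le.mp (abs_norm_sub_norm_le y x)
      have h1 : ‖x‖ / 2 ≤ ‖y‖ := by linarith [habs.1]
      have h2 : ‖y‖ ≤ 2 * ‖x‖ := by linarith [habs.2]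
      have h1' : 1 ≤ ‖y‖ := by linarith
      have hb : c₀ * ‖x‖ ^ (M_ω - 1) ≤ ‖y‖ ^ (M_ω - 1) := by
        rcases le_or_gt 0 (M_ω - 1) with hmm | hmm
        · have hstep : ((1/2 : ℝ) * ‖x‖) ^ (M_ω - 1) ≤ ‖y‖ ^ (M_ω - 1) :=
            Real.rpow_le_rpow (by positivity) (by linarith) hmm
          rw [Real.mul_rpow (by norm_num) (norm_nonneg x)] at hstep
          calc c₀ * ‖x‖ ^ (M_ω - 1)
              ≤ (1/2 : ℝ) ^ (M_ω - 1) * ‖x‖ ^ (M_ω - 1) := by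
                apply mul_le_mul_of_nonneg_right (min_le_left _ _)
                  (Real.rpow_nonneg (norm_nonneg x) _)
            _ ≤ ‖y‖ ^ (M_ω - 1) := hstep
        · have hstep : ((2 : ℝ) * ‖x‖) ^ (M_ω - 1) ≤ ‖y‖ ^ (M_ω - 1) :=
            Real.rpow_le_rpow_of_nonpos (by linarith) h2 hmm.le
          rw [Real.mul_rpow (by norm_num) (norm_nonneg x)] at hstep
          calc c₀ * ‖x‖ ^ (M_ω - 1)
              ≤ (2 : ℝ) ^ (M_ω - 1) * ‖x‖ ^ (M_ω - 1) := by
                apply mul_le_mul_of_nonneg_right (min_le_right _ _)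
                  (Real.rpow_nonneg (norm_nonneg x) _)
            _ ≤ ‖y‖ ^ (M_ω - 1) := hstep
      calc δ = C_g * (c₀ * ‖x‖ ^ (M_ω - 1)) := hδdef
        _ ≤ C_g * ‖y‖ ^ (M_ω - 1) := mul_le_mul_of_nonneg_left hb hCg.le
        _ ≤ ‖gradient ω y‖ := hA3' y h1'
    have hcontra : ¬ |ω x| < δ * r / 2 := by
      intro hsm
      obtain ⟨y, hymem, hy0⟩ := exists_zero_of_small ω hωdiff x r δ hr hδ hgrad hsm
      have hyx : ‖y - x‖ ≤ r := mem_closedBall_iff_norm.mp hymem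
      have habs := abs_le.mp (abs_norm_sub_norm_le y x)
      have hy1 : 1 ≤ ‖y‖ := by linarith [habs.1]
      have hyT : y ∈ T := by
        refine ⟨hy0, fun _ hy0' => ?_⟩
        rw [hy0'] at hy1; simp at hy1; linarith
      have hle : Metric.infDist x T ≤ dist x y := Metric.infDist_le_dist_of_mem hyT
      have hdxy : dist x y ≤ r := by
        rw [dist_eq_norm, ← norm_neg]; simpa [neg_sub] using hyx
      have hrκ : r ≤ κ * ‖x‖ / 2 := by
        have : min κ 1 ≤ κ := min_le_left _ _
        rw [hrdef]; nlinarith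
      nlinarith
    push_neg at hcontra
    calc c₁ * ‖x‖ ^ M_ω = δ * r / 2 := by
          have hpow : ‖x‖ ^ (M_ω - 1) * ‖x‖ = ‖x‖ ^ M_ω := by
            have h2 : ‖x‖ ^ M_ω = ‖x‖ ^ (M_ω - 1) * ‖x‖ ^ (1:ℝ) := by
              rw [← Real.rpow_add hx0]; congr 1; ring
            rw [h2, Real.rpow_one]
          rw [hc₁def, hδdef, hrdef, ← hpow]; ring
      _ ≤ |ω x| := hcontra
  -- ω does not vanish on S
  have hωne : ∀ x ∈ S, ω x ≠ 0 := by
    intro x hx h0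
    obtain ⟨hx1, hx2⟩ := hx
    have hxT : x ∈ T := by
      refine ⟨h0, fun _ hx0' => ?_⟩
      rw [hx0'] at hx1; simp at hx1; linarith
    have : Metric.infDist x T = 0 := Metric.infDist_zero_of_mem hxT
    nlinarith
  have hSclosed : IsClosed S := by
    rw [hS, Set.setOf_and]
    exact (isClosed_le continuous_const continuous_norm).inter
      (isClosed_le (continuous_const.mul continuous_norm) (Metric.continuous_infDist_pt T))
  -- part 1 : compact piece
  have hpart1 : IntegrableOn (fun x => |F x| / (ω x) ^ 2) (S ∩ Metric.closedBall 0 2) := by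
    have hK : IsCompact (S ∩ Metric.closedBall 0 2) :=
      (isCompact_closedBall (0:EuclideanSpace ℝ (Fin d)) 2).inter_left hSclosed
    have hcont : ContinuousOn (fun x => |F x| / (ω x) ^ 2) (S ∩ Metric.closedBall 0 2) := by
      apply ContinuousOn.div
      · exact (continuous_abs.comp hF.continuous).continuousOn
      · exact (hω.continuous.pow 2).continuousOn
      · exact fun x hx => pow_ne_zero 2 (hωne x hx.1)
    exact hcont.integrableOn_compact hK
  -- part 2 : far piece
  set s' : ℝ := M_F + 2 * M_ω with hs'def
  have hds' : (d : ℝ) < s' := by rw [hs'def]; linarith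
  have hd2 : (2:ℝ) ≤ (d:ℝ) := by exact_mod_cast hd
  have hs'pos : 0 < s' := by linarith
  have hint : Integrable (fun x : EuclideanSpace ℝ (Fin d) => C_F / c₁ ^ 2 * 2 ^ s' * (1 + ‖x‖) ^ (-s')) := by
    apply Integrable.const_mul
    apply integrable_one_add_norm (μ := volume)
    rw [finrank_euclideanSpace_fin]; exact hds'
  have hpart2 : IntegrableOn (fun x => |F x| / (ω x) ^ 2) (S \ Metric.closedBall 0 2) := by
    have hsetm : MeasurableSet (S \ Metric.closedBall 0 2) :=
      hSclosed.measurableSet.diff Metric.isClosed_closedBall.measurableSet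
    apply Integrable.mono' (hint.integrableOn)
    · exact ((continuous_abs.comp hF.continuous).measurable.div
        ((hω.continuous.pow 2).measurable)).aestronglyMeasurable
    · rw [ae_restrict_iff' hsetm]
      apply ae_of_all
      intro x hx
      obtain ⟨⟨hx1, hxd⟩, hxB⟩ := hx
      have hx2 : 2 ≤ ‖x‖ := by
        have := Metric.mem_closedBall.not.mp hxB
        rw [dist_zero_right] at this
        linarith [not_le.mp this]
      have hx0 : (0:ℝ) < ‖x‖ := by linarith
      have hωlow : c₁ * ‖x‖ ^ M_ω ≤ |ω x| := key x hx2 hxd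
      have hωppos : 0 < c₁ * ‖x‖ ^ M_ω :=
        mul_pos hc₁ (Real.rpow_pos_of_pos hx0 M_ω)
      have hω2 : (c₁ * ‖x‖ ^ M_ω) ^ 2 ≤ (ω x) ^ 2 := by
        rw [← sq_abs (ω x)]
        exact pow_le_pow_left₀ hωppos.le hωlow 2
      have hF0 : |F x| ≤ C_F * ‖x‖ ^ (-M_F) := by
        have h := hA1 0 (by norm_num) x
        rw [norm_iteratedFDeriv_zero, Real.norm_eq_abs] at h
        rw [max_eq_right hx1] at h
        simpa using h
      have hfx : |F x| / (ω x) ^ 2 ≤ (C_F * ‖x‖ ^ (-M_F)) / ((c₁ * ‖x‖ ^ M_ω) ^ 2) :=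
        div_le_div₀ (by positivity) hF0 (by positivity) hω2
      have hsq : (‖x‖ ^ M_ω) ^ 2 = ‖x‖ ^ (2 * M_ω) := by
        rw [← Real.rpow_natCast (‖x‖ ^ M_ω) 2, ← Real.rpow_mul (norm_nonneg x)]
        norm_num [mul_comm]
      have hmid : (C_F * ‖x‖ ^ (-M_F)) / ((c₁ * ‖x‖ ^ M_ω) ^ 2)
          = C_F / c₁ ^ 2 * ‖x‖ ^ (-s') := by
        have hsplit : ‖x‖ ^ (-s') = ‖x‖ ^ (-M_F) * (‖x‖ ^ (2 * M_ω))⁻¹ := by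
          rw [← Real.rpow_neg (norm_nonneg x) (2 * M_ω), ← Real.rpow_add hx0]
          congr 1
          rw [hs'def]; ring
        rw [mul_pow, hsq, hsplit]
        have h1 : (‖x‖ : ℝ) ^ (2 * M_ω) ≠ 0 := (Real.rpow_pos_of_pos hx0 _).ne'
        field_simp
      have htail : ‖x‖ ^ (-s') ≤ 2 ^ s' * (1 + ‖x‖) ^ (-s') := by
        have hApos : (0:ℝ) < ‖x‖ ^ s' := Real.rpow_pos_of_pos hx0 _
        have hBpos : (0:ℝ) < (1 + ‖x‖) ^ s' := Real.rpow_pos_of_pos (by linarith) _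
        have hAB : (1 + ‖x‖) ^ s' ≤ 2 ^ s' * ‖x‖ ^ s' := by
          have h := Real.rpow_le_rpow (by linarith : (0:ℝ) ≤ 1 + ‖x‖)
            (by linarith : 1 + ‖x‖ ≤ 2 * ‖x‖) hs'pos.le
          rwa [Real.mul_rpow (by norm_num) (norm_nonneg x)] at h
        rw [Real.rpow_neg (norm_nonneg x), Real.rpow_neg (by linarith : (0:ℝ) ≤ 1 + ‖x‖),
          inv_eq_one_div, inv_eq_one_div, mul_one_div, div_le_div_iff₀ hApos hBpos]
        nlinarith
      have hnonneg : 0 ≤ |F x| / (ω x) ^ 2 := div_nonneg (abs_nonneg _) (sq_nonneg _)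
      rw [Real.norm_eq_abs, abs_of_nonneg hnonneg]
      calc |F x| / (ω x) ^ 2 ≤ (C_F * ‖x‖ ^ (-M_F)) / ((c₁ * ‖x‖ ^ M_ω) ^ 2) := hfx
        _ = C_F / c₁ ^ 2 * ‖x‖ ^ (-s') := hmid
        _ ≤ C_F / c₁ ^ 2 * (2 ^ s' * (1 + ‖x‖) ^ (-s')) :=
            mul_le_mul_of_nonneg_left htail (by positivity)
        _ = C_F / c₁ ^ 2 * 2 ^ s' * (1 + ‖x‖) ^ (-s') := by ring
  have : S = (S ∩ Metric.closedBall 0 2) ∪ (S \ Metric.closedBall 0 2) :=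
    (Set.inter_union_diff S _).symm
  rw [this]
  exact hpart1.union hpart2
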